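/- For every z ≥ 0, G(z) ≤ (1/2)·(1 − exp(−(2/π) z²))^{1/2}, where G(z) = ∫_0^z (2π)^{-1/2} exp(−t²/2) dt. -/

import Mathlib

open MeasureTheory Real Set

/-- Polar-coordinate computation of an integral of a radial function over the open disk. -/
lemma integral_disk (R : ℝ) (hR : 0 ≤ R) (g : ℝ → ℝ) :
    ∫ p in {q : ℝ × ℝ | q.1 ^ 2 + q.2 ^ 2 < R ^ 2}, g (p.1 ^ 2 + p.2 ^ 2)
      = (2 * π) * ∫ r in Ioo (0:ℝ) R, r * g (r ^ 2) := by
  set B : Set (ℝ × ℝ) := {q : ℝ × ℝ | q.1 ^ 2 + q.2 ^ 2 < R ^ 2} with hB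
  have hBopen : IsOpen B := by
    have : Continuous fun q : ℝ × ℝ => q.1 ^ 2 + q.2 ^ 2 := by continuity
    exact isOpen_lt this continuous_const
  have hBmeas : MeasurableSet B := hBopen.measurableSet
  have key := integral_comp_polarCoord_symm (B.indicator (fun p => g (p.1 ^ 2 + p.2 ^ 2)))
  rw [integral_indicator hBmeas] at key
  rw [← key]
  have htarget : polarCoord.target = Ioi (0:ℝ) ×ˢ Ioo (-π) π := polarCoord_target
  have congr1 : ∀ p ∈ polarCoord.target,
      p.1 • (B.indicator (fun p => g (p.1 ^ 2 + p.2 ^ 2))) (polarCoord.symm p)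
        = (Ioo (0:ℝ) R ×ˢ Ioo (-π) π).indicator (fun p => p.1 * g (p.1 ^ 2)) p := by
    rintro ⟨r, θ⟩ hp
    rw [htarget] at hp
    obtain ⟨hr, hθ⟩ := hp
    simp only [mem_Ioi] at hr
    have hsq : (polarCoord.symm (r, θ)).1 ^ 2 + (polarCoord.symm (r, θ)).2 ^ 2 = r ^ 2 := by
      simp only [polarCoord_symm_apply]
      nlinarith [sin_sq_add_cos_sq θ]
    by_cases hmem : r < R
    · have h1 : polarCoord.symm (r, θ) ∈ B := by
        simp only [hB, mem_setOf_eq, hsq]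
        exact pow_lt_pow_left₀ hmem hr.le two_ne_zero
      rw [indicator_of_mem h1, indicator_of_mem (by exact ⟨⟨hr, hmem⟩, hθ⟩), hsq]
      simp [smul_eq_mul]
    · have h1 : polarCoord.symm (r, θ) ∉ B := by
        simp only [hB, mem_setOf_eq, hsq, not_lt]
        push_neg at hmem
        exact pow_le_pow_left₀ hR hmem 2
      rw [indicator_of_notMem h1, indicator_of_notMem (by
        rintro ⟨⟨_, h2⟩, _⟩; exact hmem h2)]
      simp
  rw [setIntegral_congr_fun (by rw [htarget]; exact (isOpen_Ioi.prod isOpen_Ioo).measurableSet) congr1]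
  rw [htarget, setIntegral_indicator ((measurableSet_Ioo.prod measurableSet_Ioo))]
  have hinter : (Ioi (0:ℝ) ×ˢ Ioo (-π) π) ∩ (Ioo (0:ℝ) R ×ˢ Ioo (-π) π)
      = Ioo (0:ℝ) R ×ˢ Ioo (-π) π := by
    apply inter_eq_self_of_subset_right
    exact prod_mono (Ioo_subset_Ioi_self) le_rfl
  rw [hinter]
  have : ∫ p in Ioo (0:ℝ) R ×ˢ Ioo (-π) π, p.1 * g (p.1 ^ 2)
      = ∫ p in Ioo (0:ℝ) R ×ˢ Ioo (-π) π, (fun r => r * g (r ^ 2)) p.1 * (fun _ => (1:ℝ)) p.2 := by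
    simp
  rw [this, Measure.volume_eq_prod,
    MeasureTheory.setIntegral_prod_mul (μ := volume) (ν := volume)
      (fun r : ℝ => r * g (r ^ 2)) (fun _ : ℝ => (1:ℝ)) (Ioo 0 R) (Ioo (-π) π)]
  have : ∫ _ in Ioo (-π) π, (1:ℝ) = 2 * π := by
    rw [setIntegral_const, measureReal_def, Real.volume_Ioo, smul_eq_mul, mul_one,
      ENNReal.toReal_ofReal (by linarith [Real.pi_pos])]
    ring
  rw [this]
  ring

lemma int_r_exp (R : ℝ) (hR : 0 ≤ R) :
    ∫ r in Ioo (0:ℝ) R, r * Real.exp (-r ^ 2 / 2) = 1 - Real.exp (-R ^ 2 / 2) := by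
  rw [← integral_Ioc_eq_integral_Ioo, ← intervalIntegral.integral_of_le hR]
  have hderiv : ∀ r ∈ Set.uIcc (0:ℝ) R,
      HasDerivAt (fun s => -Real.exp (-s ^ 2 / 2)) (r * Real.exp (-r ^ 2 / 2)) r := by
    intro r _
    have h := (((hasDerivAt_pow 2 r).neg.div_const 2).exp).neg
    refine h.congr_deriv ?_
    simp only [Pi.neg_apply]
    push_cast
    ring
  rw [intervalIntegral.integral_eq_sub_of_hasDerivAt hderiv (by
    apply Continuous.intervalIntegrable
    continuity)]
  simp
  ring

lemma int_r (R : ℝ) (hR : 0 ≤ R) : ∫ r in Ioo (0:ℝ) R, r = R ^ 2 / 2 := by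
  rw [← integral_Ioc_eq_integral_Ioo, ← intervalIntegral.integral_of_le hR, integral_id]
  ring

/-- `G(z) = ∫_0^z (2π)^{-1/2} exp(−t²/2) dt`, the integral of the standard
normal density from `0` to `z`. -/
noncomputable def G (z : ℝ) : ℝ :=
  ∫ t in (0 : ℝ)..z, (Real.sqrt (2 * Real.pi))⁻¹ * Real.exp (-t ^ 2 / 2)

lemma cont_gauss : Continuous fun t : ℝ => Real.exp (-t ^ 2 / 2) :=
  Real.continuous_exp.comp (((continuous_pow 2).neg).div_const 2)

set_option maxHeartbeats 1000000 in
/-- Pólya's inequality: for `z ≥ 0`, `G(z) ≤ (1/2)·(1 − exp(−(2/π) z²))^{1/2}`. -/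
theorem polya_inequality (z : ℝ) (hz : 0 ≤ z) :
    G z ≤ (1 / 2) * (1 - Real.exp (-(2 / Real.pi) * z ^ 2)) ^ ((1 : ℝ) / 2) := by
  have hπ : (0:ℝ) < π := Real.pi_pos
  set R : ℝ := 2 * z / Real.sqrt π with hRdef
  have hRnn : 0 ≤ R := by positivity
  have hR2 : R ^ 2 = 4 * z ^ 2 / π := by
    rw [hRdef, div_pow, Real.sq_sqrt hπ.le]
    ring
  have hπR2 : π * R ^ 2 = 4 * z ^ 2 := by
    rw [hR2]; field_simp
  have hexp_eq : -R ^ 2 / 2 = -(2 / π) * z ^ 2 := by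
    rw [hR2]; field_simp; ring
  set B : Set (ℝ × ℝ) := {q : ℝ × ℝ | q.1 ^ 2 + q.2 ^ 2 < R ^ 2} with hBdef
  set S : Set (ℝ × ℝ) := Ioc (-z) z ×ˢ Ioc (-z) z with hSdef
  set f : ℝ × ℝ → ℝ := fun p => Real.exp (-(p.1 ^ 2 + p.2 ^ 2) / 2) with hfdef
  have hBmeas : MeasurableSet B := by
    have : Continuous fun q : ℝ × ℝ => q.1 ^ 2 + q.2 ^ 2 := by continuity
    exact (isOpen_lt this continuous_const).measurableSet
  have hSmeas : MeasurableSet S := measurableSet_Ioc.prod measurableSet_Ioc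
  -- disk integrals
  have hdisk : ∫ p in B, f p = (2 * π) * (1 - Real.exp (-R ^ 2 / 2)) := by
    have h := integral_disk R hRnn (fun s => Real.exp (-s / 2))
    rw [hBdef]
    rw [h]
    congr 1
    rw [← int_r_exp R hRnn]
  have hvolB : volume B = ENNReal.ofReal (π * R ^ 2) := by
    have hBsub : B ⊆ Ioo (-R) R ×ˢ Ioo (-R) R := by
      rintro ⟨x, y⟩ hxy
      simp only [hBdef, mem_setOf_eq] at hxy
      have hx : |x| < R := by
        rw [← Real.sqrt_sq_eq_abs, ← Real.sqrt_sq hRnn]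
        exact Real.sqrt_lt_sqrt (sq_nonneg _) (by nlinarith [sq_nonneg y])
      have hy : |y| < R := by
        rw [← Real.sqrt_sq_eq_abs, ← Real.sqrt_sq hRnn]
        exact Real.sqrt_lt_sqrt (sq_nonneg _) (by nlinarith [sq_nonneg x])
      exact ⟨abs_lt.mp hx, abs_lt.mp hy⟩
    have hBfin : volume B ≠ ⊤ := by
      refine ((measure_mono hBsub).trans_lt ?_).ne
      rw [Measure.volume_eq_prod, Measure.prod_prod, Real.volume_Ioo]
      exact ENNReal.mul_lt_top ENNReal.ofReal_lt_top ENNReal.ofReal_lt_top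
    have h1 : ∫ _ in B, (1:ℝ) = π * R ^ 2 := by
      have h := integral_disk R hRnn (fun _ => (1:ℝ))
      simp only [mul_one] at h
      rw [hBdef, h, int_r R hRnn]
      ring
    rw [setIntegral_const, smul_eq_mul, mul_one, measureReal_def] at h1
    rw [← ENNReal.ofReal_toReal hBfin, h1]
  have hvolS : volume S = ENNReal.ofReal (π * R ^ 2) := by
    rw [hSdef, Measure.volume_eq_prod, Measure.prod_prod, Real.volume_Ioc,
      ← ENNReal.ofReal_mul (by linarith), hπR2]
    congr 1
    ring
  -- integrability
  have h1d : Integrable (fun x : ℝ => Real.exp (-x ^ 2 / 2)) := by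
    have h := integrable_exp_neg_mul_sq (b := (1:ℝ)/2) (by norm_num)
    have heq : (fun x : ℝ => Real.exp (-x ^ 2 / 2)) = fun x : ℝ => Real.exp (-(1/2 * x ^ 2)) := by
      funext x; ring_nf
    rw [heq]
    simpa using h
  have hf_eq : ∀ p : ℝ × ℝ, f p = Real.exp (-p.1 ^ 2 / 2) * Real.exp (-p.2 ^ 2 / 2) := by
    intro p
    rw [hfdef, ← Real.exp_add]
    ring_nf
  have hfint : Integrable f (volume : Measure (ℝ × ℝ)) := by
    have h : Integrable (fun p : ℝ × ℝ => Real.exp (-p.1 ^ 2 / 2) * Real.exp (-p.2 ^ 2 / 2))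
        (volume : Measure (ℝ × ℝ)) := by
      rw [Measure.volume_eq_prod]
      exact h1d.mul_prod h1d
    exact h.congr (Filter.Eventually.of_forall fun p => (hf_eq p).symm)
  -- the square integral
  set I : ℝ := ∫ t in (0:ℝ)..z, Real.exp (-t ^ 2 / 2) with hIdef
  have hG : G z = (Real.sqrt (2 * π))⁻¹ * I := by
    rw [G, hIdef, intervalIntegral.integral_const_mul]
  have hInn : 0 ≤ I := intervalIntegral.integral_nonneg hz (fun _ _ => Real.exp_nonneg _)
  have hone : IntervalIntegrable (fun t : ℝ => Real.exp (-t ^ 2 / 2)) volume (-z) 0 :=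
    cont_gauss.intervalIntegrable _ _
  have hone' : IntervalIntegrable (fun t : ℝ => Real.exp (-t ^ 2 / 2)) volume 0 z :=
    cont_gauss.intervalIntegrable _ _
  have heven : ∫ t in (-z)..(0:ℝ), Real.exp (-t ^ 2 / 2) = I := by
    have h := intervalIntegral.integral_comp_neg (a := (0:ℝ)) (b := z)
      (fun t => Real.exp (-t ^ 2 / 2))
    simp only [neg_neg, neg_zero, neg_sq] at h
    rw [hIdef, ← h]
  have hJ : ∫ t in (-z)..z, Real.exp (-t ^ 2 / 2) = 2 * I := by
    rw [← intervalIntegral.integral_add_adjacent_intervals hone hone', heven]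
    ring
  have hsq : ∫ p in S, f p = (2 * I) ^ 2 := by
    have h1 : ∫ p in S, f p
        = ∫ p in S, (fun x => Real.exp (-x ^ 2 / 2)) p.1 * (fun y => Real.exp (-y ^ 2 / 2)) p.2 := by
      exact setIntegral_congr_fun hSmeas fun p _ => hf_eq p
    rw [h1, hSdef, Measure.volume_eq_prod,
      MeasureTheory.setIntegral_prod_mul (μ := volume) (ν := volume)
        (fun x : ℝ => Real.exp (-x ^ 2 / 2)) (fun y : ℝ => Real.exp (-y ^ 2 / 2)) _ _]
    have h2 : ∫ x in Ioc (-z) z, Real.exp (-x ^ 2 / 2) = 2 * I := by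
      rw [← intervalIntegral.integral_of_le (by linarith : -z ≤ z), hJ]
    rw [h2]
    ring
  -- the comparison between square and disk
  have hvolSfin : volume S ≠ ⊤ := by rw [hvolS]; exact ENNReal.ofReal_ne_top
  have hvolBfin : volume B ≠ ⊤ := by rw [hvolB]; exact ENNReal.ofReal_ne_top
  have hvoldiff : volume (S \ B) = volume (B \ S) := by
    have h1 := measure_inter_add_diff (μ := volume) S hBmeas
    have h2 := measure_inter_add_diff (μ := volume) B hSmeas
    rw [inter_comm] at h2
    have hfin : volume (S ∩ B) ≠ ⊤ :=
      ((measure_mono inter_subset_left).trans_lt hvolSfin.lt_top).ne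
    have : volume (S ∩ B) + volume (S \ B) = volume (S ∩ B) + volume (B \ S) := by
      rw [h1, h2, hvolS, hvolB]
    exact (ENNReal.add_right_inj hfin).mp this
  have hSBfin : volume (S \ B) ≠ ⊤ :=
    ((measure_mono diff_subset).trans_lt hvolSfin.lt_top).ne
  have hBSfin : volume (B \ S) ≠ ⊤ :=
    ((measure_mono diff_subset).trans_lt hvolBfin.lt_top).ne
  have hup : ∫ p in S \ B, f p ≤ (volume (S \ B)).toReal * Real.exp (-R ^ 2 / 2) := by
    have hmono : ∀ p ∈ S \ B, f p ≤ Real.exp (-R ^ 2 / 2) := by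
      rintro p ⟨_, hpB⟩
      simp only [hBdef, mem_setOf_eq, not_lt] at hpB
      exact Real.exp_le_exp.mpr (by linarith)
    calc ∫ p in S \ B, f p ≤ ∫ _ in S \ B, Real.exp (-R ^ 2 / 2) := by
          apply setIntegral_mono_on (hfint.integrableOn)
            (integrableOn_const hSBfin)
            (hSmeas.diff hBmeas) hmono
      _ = (volume (S \ B)).toReal * Real.exp (-R ^ 2 / 2) := by
          rw [setIntegral_const, smul_eq_mul, measureReal_def]
  have hlow : (volume (B \ S)).toReal * Real.exp (-R ^ 2 / 2) ≤ ∫ p in B \ S, f p := by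
    have hmono : ∀ p ∈ B \ S, Real.exp (-R ^ 2 / 2) ≤ f p := by
      rintro p ⟨hpB, _⟩
      simp only [hBdef, mem_setOf_eq] at hpB
      exact Real.exp_le_exp.mpr (by linarith)
    calc (volume (B \ S)).toReal * Real.exp (-R ^ 2 / 2)
        = ∫ _ in B \ S, Real.exp (-R ^ 2 / 2) := by rw [setIntegral_const, smul_eq_mul, measureReal_def]
      _ ≤ ∫ p in B \ S, f p := by
          apply setIntegral_mono_on (integrableOn_const hBSfin)
            (hfint.integrableOn) (hBmeas.diff hSmeas) hmono
  have hcomp : ∫ p in S, f p ≤ ∫ p in B, f p := by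
    have h1 : (∫ p in S ∩ B, f p) + ∫ p in S \ B, f p = ∫ p in S, f p :=
      integral_inter_add_diff (s := S) hBmeas hfint.integrableOn
    have h2 : (∫ p in B ∩ S, f p) + ∫ p in B \ S, f p = ∫ p in B, f p :=
      integral_inter_add_diff (s := B) hSmeas hfint.integrableOn
    rw [inter_comm] at h2
    have htR : (volume (S \ B)).toReal = (volume (B \ S)).toReal := by rw [hvoldiff]
    rw [htR] at hup
    linarith [h1, h2, hup, hlow]
  -- conclusion
  have hkey : (2 * I) ^ 2 ≤ (2 * π) * (1 - Real.exp (-(2 / π) * z ^ 2)) := by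
    rw [← hexp_eq, ← hdisk, ← hsq]
    exact hcomp
  have hXnn : 0 ≤ 1 - Real.exp (-(2 / π) * z ^ 2) := by
    have : Real.exp (-(2 / π) * z ^ 2) ≤ 1 := by
      rw [Real.exp_le_one_iff]
      have : 0 ≤ 2 / π * z ^ 2 := by positivity
      linarith
    linarith
  rw [← Real.sqrt_eq_rpow, hG]
  have hsqrt2pi : 0 < Real.sqrt (2 * π) := Real.sqrt_pos.mpr (by linarith)
  have ha : 0 ≤ (Real.sqrt (2 * π))⁻¹ * I := by positivity
  have hab : ((Real.sqrt (2 * π))⁻¹ * I) ^ 2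
      ≤ ((1/2) * Real.sqrt (1 - Real.exp (-(2 / π) * z ^ 2))) ^ 2 := by
    have h1 : ((Real.sqrt (2 * π))⁻¹ * I) ^ 2 = I ^ 2 / (2 * π) := by
      rw [mul_pow, inv_pow, Real.sq_sqrt (by linarith : (0:ℝ) ≤ 2 * π)]
      ring
    have h2 : ((1/2) * Real.sqrt (1 - Real.exp (-(2 / π) * z ^ 2))) ^ 2
        = (1 - Real.exp (-(2 / π) * z ^ 2)) / 4 := by
      rw [mul_pow, Real.sq_sqrt hXnn]
      ring
    rw [h1, h2]
    rw [div_le_div_iff₀ (by linarith) (by norm_num)]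
    nlinarith [hkey]
  calc (Real.sqrt (2 * π))⁻¹ * I
      = Real.sqrt (((Real.sqrt (2 * π))⁻¹ * I) ^ 2) := (Real.sqrt_sq ha).symm
    _ ≤ Real.sqrt (((1/2) * Real.sqrt (1 - Real.exp (-(2 / π) * z ^ 2))) ^ 2) :=
        Real.sqrt_le_sqrt hab
    _ = (1/2) * Real.sqrt (1 - Real.exp (-(2 / π) * z ^ 2)) := by
        rw [Real.sqrt_sq (by positivity)]
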